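/- Let X ⊆ ℝⁿ be nonempty closed convex, f : ℝⁿ → ℝ continuous quasi-convex satisfying the Hölder condition of order p ∈ (0,1] with modulus L > 0 relative to X* = argmin_X f (i.e., f(x) − f* ≤ L·dist(x, X*)^p for all x), and let ε > 0. If x ∈ X with f(x) > f* + ε and g ∈ ∂*_ε f(x) with ‖g‖ = 1, then ⟨g, x − x*⟩ ≥ ((f(x) − f* − ε)/L)^{1/p} for every x* ∈ X*. -/

import Mathlib

theorem stmt10 (n : ℕ) (X : Set (EuclideanSpace ℝ (Fin n)))
    (hXne : X.Nonempty) (hXcl : IsClosed X) (hXcv : Convex ℝ X)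
    (f : EuclideanSpace ℝ (Fin n) → ℝ) (hfc : Continuous f)
    (hfq : ∀ x y : EuclideanSpace ℝ (Fin n), ∀ α : ℝ, α ∈ Set.Icc (0 : ℝ) 1 →
      f ((1 - α) • x + α • y) ≤ max (f x) (f y))
    (fstar : ℝ) (Xstar : Set (EuclideanSpace ℝ (Fin n)))
    (hXstar : Xstar = {z ∈ X | f z = fstar})
    (hmin : ∀ y ∈ X, fstar ≤ f y) (hXsne : Xstar.Nonempty)
    (p L : ℝ) (hp : p ∈ Set.Ioc (0 : ℝ) 1) (hL : 0 < L)
    (hHolder : ∀ x, f x - fstar ≤ L * Metric.infDist x Xstar ^ p)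
    (ε : ℝ) (hε : 0 < ε)
    (x : EuclideanSpace ℝ (Fin n)) (hx : x ∈ X) (hfx : fstar + ε < f x)
    (g : EuclideanSpace ℝ (Fin n)) (hg : ‖g‖ = 1)
    (hsub : ∀ y, f y < f x - ε → (inner ℝ g (y - x) : ℝ) ≤ 0) :
    ∀ xs ∈ Xstar, ((f x - fstar - ε) / L) ^ (1 / p) ≤ (inner ℝ g (x - xs) : ℝ) := by
  intro xs hxs
  obtain ⟨hp0, hp1⟩ := hp
  set A : ℝ := (f x - fstar - ε) / L with hA
  have hApos : 0 < A := div_pos (by linarith) hL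
  set r : ℝ := A ^ (1 / p) with hr
  have hrpos : 0 < r := Real.rpow_pos_of_pos hApos _
  have hrp : r ^ p = A := by
    rw [hr, ← Real.rpow_mul hApos.le, one_div_mul_cancel hp0.ne', Real.rpow_one]
  set c : ℝ := (inner ℝ g (x - xs) : ℝ) with hc
  have key : ∀ t : ℝ, 0 ≤ t → t < r → t ≤ c := by
    intro t ht0 htr
    set y : EuclideanSpace ℝ (Fin n) := xs + t • g with hy
    have hdist : Metric.infDist y Xstar ≤ t := by
      calc Metric.infDist y Xstar ≤ dist y xs := Metric.infDist_le_dist_of_mem hxs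
        _ = ‖t • g‖ := by rw [dist_eq_norm]; congr 1; rw [hy]; abel
        _ = t := by rw [norm_smul, hg, mul_one, Real.norm_eq_abs, abs_of_nonneg ht0]
    have hfy : f y < f x - ε := by
      have h1 : f y - fstar ≤ L * Metric.infDist y Xstar ^ p := hHolder y
      have h2 : Metric.infDist y Xstar ^ p ≤ t ^ p :=
        Real.rpow_le_rpow Metric.infDist_nonneg hdist hp0.le
      have h3 : t ^ p < r ^ p := Real.rpow_lt_rpow ht0 htr hp0
      have h4 : L * t ^ p < L * r ^ p := by
        exact mul_lt_mul_of_pos_left h3 hL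
      rw [hrp, hA] at h4
      rw [mul_div_cancel₀ _ hL.ne'] at h4
      nlinarith [mul_le_mul_of_nonneg_left h2 hL.le]
    have := hsub y hfy
    have hexp : (inner ℝ g (y - x) : ℝ) = -c + t := by
      rw [hy, hc]
      have : xs + t • g - x = (xs - x) + t • g := by abel
      rw [this, inner_add_right, real_inner_smul_right, real_inner_self_eq_norm_sq, hg,
        inner_sub_right, inner_sub_right]
      ring
    rw [hexp] at this
    linarith
  by_contra h
  push_neg at h
  obtain ⟨t, ht1, ht2⟩ := exists_between (max_lt h hrpos)
  have ht0 : 0 ≤ t := le_of_lt (lt_of_le_of_lt (le_max_right c 0) ht1)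
  have := key t ht0 ht2
  have : c < t := lt_of_le_of_lt (le_max_left c 0) ht1
  linarith [key t ht0 ht2]
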